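/- The function G_1(y) = g_1^{-1}(y)/y is strictly decreasing for y > 0, where g_1(x) = x·tan(x) maps (0, π/2) bijectively onto (0, ∞). -/

import Mathlib

/-- `g₁(x) = x·tan x` maps `(0, π/2)` bijectively onto `(0, ∞)`; `ginv` is its inverse.
The function `G₁(y) = g₁⁻¹(y)/y` is strictly decreasing on `(0, ∞)`. -/
theorem G1_strictAnti (ginv : ℝ → ℝ)
    (h_left : ∀ x ∈ Set.Ioo 0 (Real.pi / 2), ginv (x * Real.tan x) = x)
    (h_right : ∀ y ∈ Set.Ioi (0:ℝ),
      ginv y ∈ Set.Ioo 0 (Real.pi / 2) ∧ ginv y * Real.tan (ginv y) = y) :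
    StrictAntiOn (fun y => ginv y / y) (Set.Ioi 0) := by
  intro y₁ hy₁ y₂ hy₂ hlt
  obtain ⟨⟨hx₁0, hx₁⟩, he₁⟩ := h_right y₁ hy₁
  obtain ⟨⟨hx₂0, hx₂⟩, he₂⟩ := h_right y₂ hy₂
  set x₁ := ginv y₁
  set x₂ := ginv y₂
  have ht₁ : 0 < Real.tan x₁ := Real.tan_pos_of_pos_of_lt_pi_div_two hx₁0 hx₁
  have ht₂ : 0 < Real.tan x₂ := Real.tan_pos_of_pos_of_lt_pi_div_two hx₂0 hx₂
  -- x₁ < x₂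
  have hx : x₁ < x₂ := by
    by_contra h
    push_neg at h
    have htan : Real.tan x₂ ≤ Real.tan x₁ :=
      Real.strictMonoOn_tan.monotoneOn ⟨by linarith, hx₂⟩ ⟨by linarith, hx₁⟩ h
    have : y₂ ≤ y₁ := by
      rw [← he₁, ← he₂]
      exact mul_le_mul h htan ht₂.le hx₁0.le
    linarith
  have htan : Real.tan x₁ < Real.tan x₂ :=
    Real.tan_lt_tan_of_nonneg_of_lt_pi_div_two hx₁0.le hx₂ hx
  -- rewrite ginv y / y = 1 / tan (ginv y)
  have e₁ : x₁ / y₁ = 1 / Real.tan x₁ := by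
    rw [← he₁]; field_simp
  have e₂ : x₂ / y₂ = 1 / Real.tan x₂ := by
    rw [← he₂]; field_simp
  simp only [e₁, e₂]
  show x₂ / y₂ < x₁ / y₁
  rw [e₁, e₂]
  exact one_div_lt_one_div_of_lt ht₁ htan
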